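/- Let κ > 0 be a real number. Then log(Σ_{j=0}^∞ (2λ)^j/(j!·Γ(1+j+κ))) / (2·√(2λ)) tends to 1 as λ → +∞; equivalently, log of this series is asymptotically equivalent to 2√(2λ) as λ → +∞. -/

import Mathlib

open Real Filter

set_option maxHeartbeats 1000000



-- Gamma lower bound
lemma gamma_lb (κ : ℝ) (hκ : 0 < κ) (j : ℕ) :
    Real.Gamma (1+κ) * (Nat.factorial j : ℝ) ≤ Real.Gamma (1 + j + κ) := by
  induction j with
  | zero => simp
  | succ n ih =>
    have hpos : (0:ℝ) < 1 + n + κ := by positivity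
    have h1 : Real.Gamma (1 + (n+1 : ℕ) + κ) = (1 + n + κ) * Real.Gamma (1 + n + κ) := by
      push_cast
      rw [show (1 + ((n:ℝ)+1) + κ) = (1 + n + κ) + 1 by ring, Real.Gamma_add_one (ne_of_gt hpos)]
    rw [h1]
    push_cast [Nat.factorial_succ]
    have hΓ : 0 < Real.Gamma (1+κ) := Real.Gamma_pos_of_pos (by linarith)
    have hfac : (0:ℝ) < (Nat.factorial n : ℝ) := by positivity
    calc Real.Gamma (1+κ) * ((n+1) * (Nat.factorial n : ℝ))
        = (n+1) * (Real.Gamma (1+κ) * (Nat.factorial n : ℝ)) := by ring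
      _ ≤ (1 + n + κ) * (Real.Gamma (1+κ) * (Nat.factorial n : ℝ)) := by
          apply mul_le_mul_of_nonneg_right (by linarith) (by positivity)
      _ ≤ (1 + n + κ) * Real.Gamma (1 + n + κ) := by
          apply mul_le_mul_of_nonneg_left ih (le_of_lt hpos)



lemma gamma_ub (κ : ℝ) (hκ : 0 < κ) (m : ℕ) (hm : κ ≤ m) (j : ℕ) :
    Real.Gamma (1 + j + κ) ≤ Real.Gamma (1+κ) * (Nat.factorial (j+m) : ℝ) := by
  have hΓ : 0 < Real.Gamma (1+κ) := Real.Gamma_pos_of_pos (by linarith)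
  induction j with
  | zero =>
    simp only [Nat.cast_zero, add_zero, zero_add]
    have : (1:ℝ) ≤ (Nat.factorial m : ℝ) := by
      exact_mod_cast Nat.one_le_iff_ne_zero.mpr (Nat.factorial_ne_zero m)
    nlinarith
  | succ n ih =>
    have hpos : (0:ℝ) < 1 + n + κ := by positivity
    have h1 : Real.Gamma (1 + ((n:ℝ)+1) + κ) = (1 + n + κ) * Real.Gamma (1 + n + κ) := by
      rw [show (1 + ((n:ℝ)+1) + κ) = (1 + n + κ) + 1 by ring, Real.Gamma_add_one (ne_of_gt hpos)]
    push_cast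
    rw [h1]
    have hΓpos : 0 < Real.Gamma (1 + n + κ) := Real.Gamma_pos_of_pos hpos
    have hfacsucc : (Nat.factorial (n+1+m) : ℝ) = (1 + n + m) * Nat.factorial (n+m) := by
      rw [show n+1+m = (n+m)+1 by ring, Nat.factorial_succ]
      push_cast; ring
    rw [hfacsucc]
    calc (1 + n + κ) * Real.Gamma (1 + n + κ)
        ≤ (1 + n + κ) * (Real.Gamma (1+κ) * (Nat.factorial (n+m) : ℝ)) :=
          mul_le_mul_of_nonneg_left ih (le_of_lt hpos)
      _ ≤ (1 + n + m) * (Real.Gamma (1+κ) * (Nat.factorial (n+m) : ℝ)) := by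
          apply mul_le_mul_of_nonneg_right (by linarith) (by positivity)
      _ = Real.Gamma (1+κ) * ((1 + n + m) * (Nat.factorial (n+m) : ℝ)) := by ring

lemma factorial_ub : ∀ n : ℕ, 1 ≤ n → (Nat.factorial n : ℝ) ≤ (n:ℝ)^(n+1) * Real.exp (1 - n) := by
  intro n hn
  induction n, hn using Nat.le_induction with
  | base => simp
  | succ n hn ih =>
    have hn0 : (0:ℝ) < n := by exact_mod_cast hn
    have key : Real.exp 1 ≤ ((n+1:ℝ)/n)^(n+1) := by
      have h1 : (1:ℝ) - 1/(n+1) ≤ Real.exp (-(1/(n+1))) := by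
        have := Real.add_one_le_exp (-(1/((n:ℝ)+1)))
        linarith
      have h2 : Real.exp (1/((n:ℝ)+1)) ≤ ((n:ℝ)+1)/n := by
        have hlhs : (0:ℝ) < 1 - 1/(n+1) := by
          rw [sub_pos]; rw [div_lt_one (by positivity)]; linarith
        have := one_div_le_one_div_of_le hlhs h1
        rwa [one_div (Real.exp _), ← Real.exp_neg, neg_neg,
          show (1:ℝ) - 1/(n+1) = n/(n+1) by field_simp; ring, one_div_div] at this
      calc Real.exp 1 = (Real.exp (1/((n:ℝ)+1)))^(n+1) := by
            rw [← Real.exp_nat_mul]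
            rw [show ((n:ℕ)+1:ℕ) * (1/((n:ℝ)+1)) = ((n:ℝ)+1) * (1/((n:ℝ)+1)) by push_cast; ring,
              mul_one_div, div_self (by positivity : ((n:ℝ)+1) ≠ 0)]
        _ ≤ (((n:ℝ)+1)/n)^(n+1) := by
            apply pow_le_pow_left₀ (le_of_lt (Real.exp_pos _)) h2
    have step : ((n:ℝ))^(n+1) * Real.exp 1 ≤ ((n:ℝ)+1)^(n+1) := by
      have := mul_le_mul_of_nonneg_left key (le_of_lt (pow_pos hn0 (n+1)))
      calc ((n:ℝ))^(n+1) * Real.exp 1 ≤ (n:ℝ)^(n+1) * (((n:ℝ)+1)/n)^(n+1) := this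
        _ = ((n:ℝ)+1)^(n+1) := by
            rw [← mul_pow, mul_div_cancel₀]
            exact ne_of_gt hn0
    have hexp : Real.exp (1 - (n:ℝ)) = Real.exp 1 * Real.exp (-(n:ℝ)) := by
      rw [← Real.exp_add]; ring_nf
    push_cast [Nat.factorial_succ]
    calc ((n:ℝ)+1) * (Nat.factorial n : ℝ)
        ≤ ((n:ℝ)+1) * ((n:ℝ)^(n+1) * Real.exp (1 - n)) :=
          mul_le_mul_of_nonneg_left ih (by positivity)
      _ = ((n:ℝ)+1) * ((n:ℝ)^(n+1) * Real.exp 1) * Real.exp (-(n:ℝ)) := by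
          rw [hexp]; ring
      _ ≤ ((n:ℝ)+1) * ((n:ℝ)+1)^(n+1) * Real.exp (-(n:ℝ)) := by
          apply mul_le_mul_of_nonneg_right _ (le_of_lt (Real.exp_pos _))
          exact mul_le_mul_of_nonneg_left step (by positivity)
      _ = ((n:ℝ)+1)^(n+1+1) * Real.exp (1 - ((n:ℝ)+1)) := by
          rw [show (1:ℝ) - ((n:ℝ)+1) = -(n:ℝ) by ring, pow_succ]
          ring



lemma term_le (κ : ℝ) (hκ : 0 < κ) (x : ℝ) (hx : 0 ≤ x) (j : ℕ) :
    x ^ j / ((Nat.factorial j : ℝ) * Real.Gamma (1 + j + κ))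
      ≤ (Real.Gamma (1+κ))⁻¹ * ((2 * Real.sqrt x) ^ (2*j) / (Nat.factorial (2*j) : ℝ)) := by
  have hΓ : 0 < Real.Gamma (1+κ) := Real.Gamma_pos_of_pos (by linarith)
  have hfac : (0:ℝ) < (Nat.factorial j : ℝ) := by positivity
  have hGj : 0 < Real.Gamma (1 + j + κ) := Real.Gamma_pos_of_pos (by positivity)
  have h1 : x ^ j / ((Nat.factorial j : ℝ) * Real.Gamma (1 + j + κ))
      ≤ x ^ j / (Real.Gamma (1+κ) * ((Nat.factorial j : ℝ))^2) := by
    apply div_le_div_of_nonneg_left (by positivity) (by positivity)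
    calc Real.Gamma (1+κ) * ((Nat.factorial j : ℝ))^2
        = (Nat.factorial j : ℝ) * (Real.Gamma (1+κ) * (Nat.factorial j : ℝ)) := by ring
      _ ≤ (Nat.factorial j : ℝ) * Real.Gamma (1 + j + κ) :=
          mul_le_mul_of_nonneg_left (gamma_lb κ hκ j) (le_of_lt hfac)
  have hbin : ((Nat.factorial (2*j) : ℝ)) ≤ 4 ^ j * ((Nat.factorial j : ℝ))^2 := by
    have h := Nat.choose_mul_factorial_mul_factorial (show j ≤ 2*j by omega)
    rw [show 2*j - j = j by omega] at h
    have hc : (2*j).choose j ≤ 4 ^ j := by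
      calc (2*j).choose j ≤ ∑ i ∈ Finset.range (2*j+1), (2*j).choose i :=
            Finset.single_le_sum (fun i _ => Nat.zero_le _) (by simp [Nat.lt_succ_iff]; omega)
        _ = 2 ^ (2*j) := Nat.sum_range_choose (2*j)
        _ = 4 ^ j := by rw [pow_mul]; norm_num
    have hnat : Nat.factorial (2*j) ≤ 4^j * (Nat.factorial j * Nat.factorial j) := by
      calc Nat.factorial (2*j) = (2*j).choose j * Nat.factorial j * Nat.factorial j := h.symm
        _ = (2*j).choose j * (Nat.factorial j * Nat.factorial j) := by ring
        _ ≤ 4^j * (Nat.factorial j * Nat.factorial j) := Nat.mul_le_mul_right _ hc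
    calc ((Nat.factorial (2*j) : ℝ)) ≤ ((4^j * (Nat.factorial j * Nat.factorial j) : ℕ) : ℝ) := by
          exact_mod_cast hnat
      _ = 4 ^ j * ((Nat.factorial j : ℝ))^2 := by push_cast; ring
  have hpow : (2 * Real.sqrt x) ^ (2*j) = 4 ^ j * x ^ j := by
    rw [pow_mul, mul_pow, Real.sq_sqrt hx, ← mul_pow]
    norm_num
  have key : x ^ j / ((Nat.factorial j : ℝ))^2 ≤ 4 ^ j * x ^ j / (Nat.factorial (2*j) : ℝ) := by
    rw [div_le_div_iff₀ (by positivity) (by positivity)]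
    calc x ^ j * (Nat.factorial (2*j) : ℝ) ≤ x ^ j * (4 ^ j * ((Nat.factorial j : ℝ))^2) :=
          mul_le_mul_of_nonneg_left hbin (pow_nonneg hx j)
      _ = 4 ^ j * x ^ j * ((Nat.factorial j : ℝ))^2 := by ring
  have h2 : x ^ j / (Real.Gamma (1+κ) * ((Nat.factorial j : ℝ))^2)
      ≤ (Real.Gamma (1+κ))⁻¹ * ((2 * Real.sqrt x) ^ (2*j) / (Nat.factorial (2*j) : ℝ)) := by
    rw [hpow, show x ^ j / (Real.Gamma (1+κ) * ((Nat.factorial j : ℝ))^2)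
        = (Real.Gamma (1+κ))⁻¹ * (x ^ j / ((Nat.factorial j : ℝ))^2) by ring]
    exact mul_le_mul_of_nonneg_left key (by positivity)
  exact h1.trans h2



lemma exp_tsum (y : ℝ) : Real.exp y = ∑' k : ℕ, y ^ k / (Nat.factorial k : ℝ) := by
  rw [Real.exp_eq_exp_ℝ, NormedSpace.exp_eq_tsum_div]

lemma term_nonneg (κ : ℝ) (hκ : 0 < κ) (x : ℝ) (hx : 0 ≤ x) (j : ℕ) :
    0 ≤ x ^ j / ((Nat.factorial j : ℝ) * Real.Gamma (1 + j + κ)) := by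
  have hGj : 0 < Real.Gamma (1 + j + κ) := Real.Gamma_pos_of_pos (by positivity)
  positivity

lemma summable_even (y : ℝ) : Summable (fun j : ℕ => y ^ (2*j) / (Nat.factorial (2*j) : ℝ)) := by
  apply (Real.summable_pow_div_factorial y).comp_injective
  intro a b hab; omega

lemma summable_term (κ : ℝ) (hκ : 0 < κ) (x : ℝ) (hx : 0 ≤ x) :
    Summable (fun j : ℕ => x ^ j / ((Nat.factorial j : ℝ) * Real.Gamma (1 + j + κ))) := by
  apply Summable.of_nonneg_of_le (term_nonneg κ hκ x hx) (term_le κ hκ x hx)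
  exact (summable_even (2 * Real.sqrt x)).mul_left _

lemma tsum_ub (κ : ℝ) (hκ : 0 < κ) (x : ℝ) (hx : 0 ≤ x) :
    (∑' j : ℕ, x ^ j / ((Nat.factorial j : ℝ) * Real.Gamma (1 + j + κ)))
      ≤ Real.exp (2 * Real.sqrt x) / Real.Gamma (1+κ) := by
  have hΓ : 0 < Real.Gamma (1+κ) := Real.Gamma_pos_of_pos (by linarith)
  set y := 2 * Real.sqrt x with hy
  have hy0 : 0 ≤ y := by positivity
  have h1 : (∑' j : ℕ, x ^ j / ((Nat.factorial j : ℝ) * Real.Gamma (1 + j + κ)))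
      ≤ ∑' j : ℕ, (Real.Gamma (1+κ))⁻¹ * (y ^ (2*j) / (Nat.factorial (2*j) : ℝ)) :=
    Summable.tsum_le_tsum (term_le κ hκ x hx) (summable_term κ hκ x hx)
      ((summable_even y).mul_left _)
  have h2 : (∑' j : ℕ, (Real.Gamma (1+κ))⁻¹ * (y ^ (2*j) / (Nat.factorial (2*j) : ℝ)))
      = (Real.Gamma (1+κ))⁻¹ * ∑' j : ℕ, y ^ (2*j) / (Nat.factorial (2*j) : ℝ) :=
    tsum_mul_left
  have h3 : (∑' j : ℕ, y ^ (2*j) / (Nat.factorial (2*j) : ℝ))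
      ≤ ∑' k : ℕ, y ^ k / (Nat.factorial k : ℝ) := by
    have := tsum_comp_le_tsum_of_inj (Real.summable_pow_div_factorial y)
      (fun k => by positivity) (show Function.Injective (fun j : ℕ => 2*j) from fun a b hab => by
        have h2ab : 2*a = 2*b := hab
        omega)
    exact this
  rw [← exp_tsum] at h3
  calc (∑' j : ℕ, x ^ j / ((Nat.factorial j : ℝ) * Real.Gamma (1 + j + κ)))
      ≤ (Real.Gamma (1+κ))⁻¹ * ∑' j : ℕ, y ^ (2*j) / (Nat.factorial (2*j) : ℝ) := h2 ▸ h1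
    _ ≤ (Real.Gamma (1+κ))⁻¹ * Real.exp y := mul_le_mul_of_nonneg_left h3 (inv_nonneg.mpr hΓ.le)
    _ = Real.exp y / Real.Gamma (1+κ) := by rw [div_eq_inv_mul]



lemma aux_tendsto (a b c : ℝ) (hb : 0 ≤ b) :
    Filter.Tendsto (fun t : ℝ => (2*t - a*Real.log (t+b) - c)/(2*t)) atTop (nhds 1) := by
  have h1 : (fun t : ℝ => Real.log (t+b)) =o[atTop] (fun t => t+b) :=
    Real.isLittleO_log_id_atTop.comp_tendsto (tendsto_atTop_add_const_right atTop b tendsto_id)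
  have h2 : (fun t : ℝ => t+b) =O[atTop] (fun t : ℝ => t) := by
    rw [Asymptotics.isBigO_iff]
    refine ⟨2, ?_⟩
    filter_upwards [eventually_ge_atTop (max b 0)] with t ht
    have ht0 : 0 ≤ t := le_trans (le_max_right b 0) ht
    have htb : b ≤ t := le_trans (le_max_left b 0) ht
    rw [Real.norm_eq_abs, Real.norm_eq_abs, abs_of_nonneg (by linarith : (0:ℝ) ≤ t + b), abs_of_nonneg ht0]
    linarith
  have hlog : Filter.Tendsto (fun t : ℝ => Real.log (t+b) / t) atTop (nhds 0) :=
    (h1.trans_isBigO h2).tendsto_div_nhds_zero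
  have hinv : Filter.Tendsto (fun t : ℝ => t⁻¹) atTop (nhds 0) := tendsto_inv_atTop_zero
  have hg : Filter.Tendsto (fun t : ℝ => 1 - (a/2)*(Real.log (t+b)/t) - (c/2)*t⁻¹) atTop
      (nhds (1 - (a/2)*0 - (c/2)*0)) :=
    (tendsto_const_nhds.sub (hlog.const_mul (a/2))).sub (hinv.const_mul (c/2))
  norm_num at hg
  apply hg.congr'
  filter_upwards [eventually_gt_atTop (0:ℝ)] with t ht
  field_simp

lemma sqrt_two_mul_atTop : Filter.Tendsto (fun lam : ℝ => Real.sqrt (2*lam)) atTop atTop := by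
  rw [Filter.tendsto_atTop_atTop]
  intro d
  refine ⟨d^2, fun a ha => ?_⟩
  have h0 : d ≤ |d| := le_abs_self d
  have : |d| = Real.sqrt (d^2) := (Real.sqrt_sq_eq_abs d).symm
  rw [this] at h0
  refine h0.trans (Real.sqrt_le_sqrt ?_)
  nlinarith [sq_nonneg d, sq_nonneg (d-1)]



lemma log_tsum_lb (κ : ℝ) (hκ : 0 < κ) (m : ℕ) (hκm : κ ≤ m) (lam : ℝ)
    (hlam : ((m:ℝ)+2)^2 ≤ lam) :
    2*Real.sqrt (2*lam) - (2*m+2)*Real.log (Real.sqrt (2*lam)+m)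
        - (4 + Real.log (Real.Gamma (1+κ)))
      ≤ Real.log (∑' j : ℕ, (2*lam)^j / ((Nat.factorial j : ℝ) * Real.Gamma (1 + j + κ))) := by
  have hΓ : 0 < Real.Gamma (1+κ) := Real.Gamma_pos_of_pos (by linarith)
  have hm0 : (0:ℝ) ≤ m := Nat.cast_nonneg m
  have hlam0 : 0 < lam := lt_of_lt_of_le (by positivity) hlam
  have hx0 : (0:ℝ) ≤ 2*lam := by linarith
  set t := Real.sqrt (2*lam) with hts
  have ht2 : (m:ℝ)+2 ≤ t := by
    rw [hts]
    calc (m:ℝ)+2 = Real.sqrt (((m:ℝ)+2)^2) := (Real.sqrt_sq (by positivity)).symm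
      _ ≤ Real.sqrt (2*lam) := Real.sqrt_le_sqrt (by nlinarith)
  have ht0 : 0 < t := by linarith
  have ht1 : 1 ≤ t := by linarith
  have hx : 2*lam = t^2 := (Real.sq_sqrt hx0).symm
  set j := ⌊t⌋₊ with hjdef
  have hjle : (j:ℝ) ≤ t := Nat.floor_le ht0.le
  have hjgt : t - 1 ≤ (j:ℝ) := by
    have := Nat.lt_floor_add_one t
    push_cast at this ⊢
    linarith
  have hj1 : 1 ≤ j := Nat.le_floor (by exact_mod_cast ht1)
  have hn1 : 1 ≤ j + m := le_trans hj1 (Nat.le_add_right j m)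
  have hN1 : (1:ℝ) ≤ ((j+m : ℕ):ℝ) := by exact_mod_cast hn1
  have hNle : ((j+m : ℕ):ℝ) ≤ t + m := by push_cast; linarith
  -- denominator bound
  have hGj : 0 < Real.Gamma (1 + j + κ) := Real.Gamma_pos_of_pos (by positivity)
  have hfacpos : (0:ℝ) < (Nat.factorial j : ℝ) := by positivity
  have hfacle : (Nat.factorial j : ℝ) ≤ (Nat.factorial (j+m) : ℝ) := by
    exact_mod_cast Nat.factorial_le (Nat.le_add_right j m)
  have hgub := gamma_ub κ hκ m hκm j
  have hfub := factorial_ub (j+m) hn1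
  set N : ℝ := ((j+m : ℕ):ℝ) with hNdef
  set E : ℝ := N^(j+m+1) * Real.exp (1 - N) with hEdef
  have hE0 : 0 < E := by
    rw [hEdef]; positivity
  have hden : (Nat.factorial j : ℝ) * Real.Gamma (1 + j + κ)
      ≤ Real.Gamma (1+κ) * E^2 := by
    calc (Nat.factorial j : ℝ) * Real.Gamma (1 + j + κ)
        ≤ (Nat.factorial (j+m) : ℝ) * (Real.Gamma (1+κ) * (Nat.factorial (j+m) : ℝ)) :=
          mul_le_mul hfacle hgub (le_of_lt hGj) (by positivity)
      _ = Real.Gamma (1+κ) * ((Nat.factorial (j+m) : ℝ))^2 := by ring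
      _ ≤ Real.Gamma (1+κ) * E^2 := by
          apply mul_le_mul_of_nonneg_left _ hΓ.le
          exact pow_le_pow_left₀ (by positivity) hfub 2
  have hterm : (2*lam)^j / (Real.Gamma (1+κ) * E^2)
      ≤ (2*lam)^j / ((Nat.factorial j : ℝ) * Real.Gamma (1 + j + κ)) := by
    apply div_le_div_of_nonneg_left (by positivity) (by positivity) hden
  have hlow : (2*lam)^j / (Real.Gamma (1+κ) * E^2)
      ≤ (∑' i : ℕ, (2*lam)^i / ((Nat.factorial i : ℝ) * Real.Gamma (1 + i + κ))) :=
    hterm.trans (Summable.le_tsum (summable_term κ hκ _ hx0) j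
      (fun i _ => term_nonneg κ hκ _ hx0 i))
  have hRpos : 0 < (2*lam)^j / (Real.Gamma (1+κ) * E^2) := by positivity
  have hlogS : Real.log ((2*lam)^j / (Real.Gamma (1+κ) * E^2))
      ≤ Real.log (∑' i : ℕ, (2*lam)^i / ((Nat.factorial i : ℝ) * Real.Gamma (1 + i + κ))) :=
    Real.log_le_log hRpos hlow
  -- compute the log of the lower bound
  have hlogR : Real.log ((2*lam)^j / (Real.Gamma (1+κ) * E^2))
      = (j:ℝ) * (2 * Real.log t)
        - (Real.log (Real.Gamma (1+κ)) + 2*(((j:ℝ)+m+1)*Real.log N + (1 - N))) := by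
    rw [Real.log_div (by positivity) (by positivity), Real.log_mul (ne_of_gt hΓ) (by positivity),
      Real.log_pow, Real.log_pow, hEdef, Real.log_mul (by positivity) (Real.exp_ne_zero _),
      Real.log_pow, Real.log_exp, hx, Real.log_pow]
    push_cast
    ring
  rw [hlogR] at hlogS
  refine le_trans ?_ hlogS
  -- final chain of inequalities
  have hlogNle : Real.log N ≤ Real.log (t+m) := Real.log_le_log (by positivity) hNle
  have htm1 : (1:ℝ) ≤ t + m := by linarith
  have hdiff0 : 0 ≤ Real.log (t+m) - Real.log t :=
    sub_nonneg.mpr (Real.log_le_log ht0 (by linarith))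
  have hdiffle : Real.log (t+m) - Real.log t ≤ (m:ℝ)/t := by
    rw [← Real.log_div (by positivity) (ne_of_gt ht0)]
    have h1 := Real.log_le_sub_one_of_pos (show 0 < (t+(m:ℝ))/t by positivity)
    have h2 : (t+(m:ℝ))/t - 1 = (m:ℝ)/t := by field_simp; ring
    linarith
  have hprod : (j:ℝ)*Real.log (t+m) - (j:ℝ)*Real.log t ≤ m := by
    calc (j:ℝ)*Real.log (t+m) - (j:ℝ)*Real.log t
        = (j:ℝ)*(Real.log (t+m) - Real.log t) := by ring
      _ ≤ t*(Real.log (t+m) - Real.log t) := mul_le_mul_of_nonneg_right hjle hdiff0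
      _ ≤ t*((m:ℝ)/t) := mul_le_mul_of_nonneg_left hdiffle ht0.le
      _ = m := by field_simp
  have hcoef2 : ((j:ℝ)+m+1)*Real.log N
      ≤ (j:ℝ)*Real.log (t+m) + ((m:ℝ)+1)*Real.log (t+m) := by
    calc ((j:ℝ)+m+1)*Real.log N ≤ ((j:ℝ)+m+1)*Real.log (t+m) :=
          mul_le_mul_of_nonneg_left hlogNle (by positivity)
      _ = (j:ℝ)*Real.log (t+m) + ((m:ℝ)+1)*Real.log (t+m) := by ring
  have hNval : N = (j:ℝ) + m := by rw [hNdef]; push_cast; ring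
  rw [hNval] at hcoef2 ⊢
  linarith [hprod, hcoef2, hjgt]



theorem stmt_2 (κ : ℝ) (hκ : 0 < κ) :
    Filter.Tendsto
      (fun lam : ℝ =>
        Real.log (∑' j : ℕ, (2 * lam) ^ j / ((Nat.factorial j : ℝ) * Real.Gamma (1 + j + κ)))
          / (2 * Real.sqrt (2 * lam)))
      Filter.atTop (nhds 1) := by
  have hΓ : 0 < Real.Gamma (1+κ) := Real.Gamma_pos_of_pos (by linarith)
  set m : ℕ := ⌈κ⌉₊ with hmdef
  have hκm : κ ≤ m := Nat.le_ceil κ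
  have hm0 : (0:ℝ) ≤ m := Nat.cast_nonneg m
  have hg : Filter.Tendsto
      ((fun t : ℝ => (2*t - (2*(m:ℝ)+2)*Real.log (t+(m:ℝ)) - (4 + Real.log (Real.Gamma (1+κ))))/(2*t))
        ∘ (fun lam : ℝ => Real.sqrt (2*lam))) atTop (nhds 1) :=
    (aux_tendsto (2*(m:ℝ)+2) m (4 + Real.log (Real.Gamma (1+κ))) hm0).comp sqrt_two_mul_atTop
  have hh : Filter.Tendsto
      ((fun t : ℝ => (2*t - 0*Real.log (t+(m:ℝ)) - Real.log (Real.Gamma (1+κ)))/(2*t))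
        ∘ (fun lam : ℝ => Real.sqrt (2*lam))) atTop (nhds 1) :=
    (aux_tendsto 0 m (Real.log (Real.Gamma (1+κ))) hm0).comp sqrt_two_mul_atTop
  apply tendsto_of_tendsto_of_tendsto_of_le_of_le' hg hh
  · filter_upwards [eventually_ge_atTop (((m:ℝ)+2)^2)] with lam hlam
    have hlam0 : 0 < lam := lt_of_lt_of_le (by positivity) hlam
    have ht0 : 0 < Real.sqrt (2*lam) := Real.sqrt_pos.mpr (by linarith)
    simp only [Function.comp_apply]
    gcongr
    exact log_tsum_lb κ hκ m hκm lam hlam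
  · filter_upwards [eventually_ge_atTop (((m:ℝ)+2)^2)] with lam hlam
    have hlam0 : 0 < lam := lt_of_lt_of_le (by positivity) hlam
    have hx0 : (0:ℝ) ≤ 2*lam := by linarith
    have ht0 : 0 < Real.sqrt (2*lam) := Real.sqrt_pos.mpr (by linarith)
    simp only [Function.comp_apply]
    have hG0 : 0 < Real.Gamma (1 + ((0:ℕ):ℝ) + κ) := Real.Gamma_pos_of_pos (by positivity)
    have hS0 : 0 < ∑' i : ℕ, (2*lam)^i / ((Nat.factorial i : ℝ) * Real.Gamma (1 + i + κ)) := by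
      refine lt_of_lt_of_le ?_ (Summable.le_tsum (summable_term κ hκ _ hx0) 0
        (fun i _ => term_nonneg κ hκ _ hx0 i))
      positivity
    have hub := tsum_ub κ hκ (2*lam) hx0
    have hlog : Real.log (∑' i : ℕ, (2*lam)^i / ((Nat.factorial i : ℝ) * Real.Gamma (1 + i + κ)))
        ≤ 2*Real.sqrt (2*lam) - Real.log (Real.Gamma (1+κ)) := by
      refine le_trans (Real.log_le_log hS0 hub) ?_
      rw [Real.log_div (Real.exp_ne_zero _) (ne_of_gt hΓ), Real.log_exp]
    have heq : 2*Real.sqrt (2*lam) - 0*Real.log (Real.sqrt (2*lam)+(m:ℝ))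
        - Real.log (Real.Gamma (1+κ)) = 2*Real.sqrt (2*lam) - Real.log (Real.Gamma (1+κ)) := by
      ring
    rw [heq]
    gcongr
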